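/- Let X = 𝕋² = (ℝ/ℤ)² and let σ be a topological measure on X which is invariant under all translations of X. Let k, l be coprime integers, φ(p,q) = l·p − k·q, let α ∈ (0,1), and let A = φ⁻¹(π([0, α])) be the closed linear annulus of slope (k,l) and area α. Then σ(A) = α; that is, the value of σ on any closed linear annulus equals its area. -/

import Mathlib

/-- A topological measure (Aarnes) on a compact Hausdorff space `Z`. -/
structure IsTopMeasure {Z : Type*} [TopologicalSpace Z] (τ : Set Z → ℝ) : Prop where
  mem_Icc : ∀ A : Set Z, IsOpen A ∨ IsClosed A → τ A ∈ Set.Icc (0 : ℝ) 1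
  univ : τ Set.univ = 1
  compl_add : ∀ K : Set Z, IsCompact K → τ Kᶜ + τ K = 1
  add : ∀ K K' : Set Z, IsCompact K → IsCompact K' → Disjoint K K' →
      τ (K ∪ K') = τ K + τ K'
  mono : ∀ K K' : Set Z, IsCompact K → IsCompact K' → K ⊆ K' → τ K ≤ τ K'
  inner_reg : ∀ U : Set Z, IsOpen U →
      IsLUB {r : ℝ | ∃ K : Set Z, IsCompact K ∧ K ⊆ U ∧ τ K = r} (τ U)

/-- The two-dimensional torus `𝕋² = (ℝ/ℤ)²`. -/
abbrev Torus2 := UnitAddCircle × UnitAddCircle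

open Set

section Aux

/-! ### Lemmas about the circle `ℝ/ℤ` -/

private lemma circle_inj {x y : ℝ} (hx : x ∈ Set.Ico (0:ℝ) 1) (hy : y ∈ Set.Ico (0:ℝ) 1)
    (h : (x : UnitAddCircle) = y) : x = y := by
  have hx' : x ∈ Set.Ico (0:ℝ) (0 + 1) := by simpa using hx
  have hy' : y ∈ Set.Ico (0:ℝ) (0 + 1) := by simpa using hy
  exact (AddCircle.coe_eq_coe_iff_of_mem_Ico hx' hy').mp h

private lemma circle_disj {S T : Set ℝ} (hS : S ⊆ Ico 0 1) (hT : T ⊆ Ico 0 1)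
    (h : Disjoint S T) :
    Disjoint (((↑) : ℝ → UnitAddCircle) '' S) (((↑) : ℝ → UnitAddCircle) '' T) := by
  rw [Set.disjoint_left]
  rintro _ ⟨x, hx, rfl⟩ ⟨y, hy, hxy⟩
  have := circle_inj (hT hy) (hS hx) hxy
  exact (Set.disjoint_left.mp h hx) (this ▸ hy)

private lemma circle_compl_sub {S T : Set ℝ} (h : Ico (0:ℝ) 1 \ S ⊆ T) :
    ((((↑) : ℝ → UnitAddCircle) '' S))ᶜ ⊆ ((↑) : ℝ → UnitAddCircle) '' T := by
  intro x hx
  obtain ⟨r, hr, rfl⟩ : ∃ r ∈ Ico (0:ℝ) 1, (r : UnitAddCircle) = x := by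
    have h1 : x ∈ ((↑) : ℝ → UnitAddCircle) '' Ico 0 (0 + 1) := by
      rw [AddCircle.coe_image_Ico_eq]; trivial
    simpa using h1
  exact ⟨r, h ⟨hr, fun hrS => hx ⟨r, hrS, rfl⟩⟩, rfl⟩

private lemma circle_trans_image (t : ℝ) (S : Set ℝ) :
    ((↑) : ℝ → UnitAddCircle) '' ((fun x => x + t) '' S)
      = (fun y => y + ((t : ℝ) : UnitAddCircle)) '' (((↑) : ℝ → UnitAddCircle) '' S) := by
  rw [← Set.image_comp, ← Set.image_comp]
  congr 1

/-! ### Lemmas about intervals of reals -/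

private lemma arcs_disjoint {d s : ℝ} (hs : 0 ≤ s) (hsd : s < d) {i j : ℕ} (hij : i ≠ j) :
    Disjoint (Icc ((i:ℝ)*d) ((i:ℝ)*d+s)) (Icc ((j:ℝ)*d) ((j:ℝ)*d+s)) := by
  have key : ∀ i j : ℕ, i < j →
      Disjoint (Icc ((i:ℝ)*d) ((i:ℝ)*d+s)) (Icc ((j:ℝ)*d) ((j:ℝ)*d+s)) := by
    intro i j h
    rw [Set.disjoint_left]
    rintro x ⟨h1, h2⟩ ⟨h3, h4⟩
    have hij : (i:ℝ) + 1 ≤ (j:ℝ) := by exact_mod_cast h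
    have hd : 0 < d := lt_of_le_of_lt hs hsd
    nlinarith
  rcases hij.lt_or_gt with h | h
  · exact key i j h
  · exact (key j i h).symm

private lemma arcs_sub_Ico {d s : ℝ} (hs : 0 ≤ s) (hsd : s < d) {n : ℕ} (hnd : (n:ℝ) * d ≤ 1)
    {i : ℕ} (hi : i < n) : Icc ((i:ℝ)*d) ((i:ℝ)*d+s) ⊆ Ico 0 1 := by
  have hd : 0 < d := lt_of_le_of_lt hs hsd
  have h1 : (i:ℝ) + 1 ≤ (n:ℝ) := by exact_mod_cast hi
  intro x ⟨hx1, hx2⟩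
  constructor
  · have : (0:ℝ) ≤ (i:ℝ)*d := by positivity
    linarith
  · nlinarith

private lemma gaps_cover {n : ℕ} (hn : 0 < n) {s : ℝ} {r : ℝ}
    (hr : r ∈ Ico (0:ℝ) 1) (hno : ∀ i : ℕ, i < n → r ∉ Icc ((i:ℝ)*(1/n)) ((i:ℝ)*(1/n)+s)) :
    ∃ i : ℕ, i < n ∧ r ∈ Ioo ((i:ℝ)*(1/n)+s) ((i:ℝ)*(1/n)+s+(1/n - s)) := by
  have hnpos : (0:ℝ) < n := by exact_mod_cast hn
  set i := ⌊r * n⌋₊ with hi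
  have hin : i < n := by
    rw [hi]
    rw [Nat.floor_lt (mul_nonneg hr.1 hnpos.le)]
    calc r * n < 1 * n := by apply mul_lt_mul_of_pos_right hr.2 hnpos
    _ = (n:ℝ) := by ring
  have h1 : (i:ℝ) ≤ r * n := Nat.floor_le (mul_nonneg hr.1 hnpos.le)
  have h2 : r * n < (i:ℝ) + 1 := Nat.lt_floor_add_one _
  have hlow : (i:ℝ) * (1/n) ≤ r := by
    have : (i:ℝ)/n ≤ r := by rw [div_le_iff₀ hnpos]; linarith
    linarith [show (i:ℝ)*(1/n) = (i:ℝ)/n by ring]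
  have hhigh : r < ((i:ℝ)+1)/n := by rw [lt_div_iff₀ hnpos]; linarith
  have hmid : ¬ ((i:ℝ)*(1/n) ≤ r ∧ r ≤ (i:ℝ)*(1/n)+s) := by
    intro h; exact hno i hin ⟨h.1, h.2⟩
  push_neg at hmid
  have h3 : (i:ℝ)*(1/n)+s < r := hmid hlow
  have h4 : (i:ℝ)*(1/n)+s+(1/n-s) = ((i:ℝ)+1)/n := by ring
  exact ⟨i, hin, ⟨h3, by linarith⟩⟩

/-! ### Generic lemmas about topological measures on the torus -/

variable {σ : Set Torus2 → ℝ}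

private lemma sigma_empty (hσ : IsTopMeasure σ) : σ ∅ = 0 := by
  have := hσ.add ∅ ∅ isCompact_empty isCompact_empty (disjoint_bot_left)
  simp at this
  linarith

private lemma sigma_biUnion (hσ : IsTopMeasure σ) :
    ∀ (n : ℕ) (K : ℕ → Set Torus2), (∀ i, i < n → IsCompact (K i)) →
    (∀ i, i < n → ∀ j, j < n → i ≠ j → Disjoint (K i) (K j)) →
    σ (⋃ i ∈ Finset.range n, K i) = ∑ i ∈ Finset.range n, σ (K i) := by
  intro n
  induction n with
  | zero => intro K _ _; simpa using sigma_empty hσ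
  | succ n ih =>
    intro K hc hd
    rw [Finset.range_add_one, Finset.set_biUnion_insert, Finset.sum_insert (by simp)]
    have hUc : IsCompact (⋃ i ∈ Finset.range n, K i) :=
      (Finset.range n).isCompact_biUnion (fun i hi => hc i (by simp at hi; omega))
    have hdisj : Disjoint (K n) (⋃ i ∈ Finset.range n, K i) := by
      rw [Set.disjoint_iUnion_right]
      intro i
      rw [Set.disjoint_iUnion_right]
      intro hi
      simp only [Finset.mem_range] at hi
      exact hd n (by omega) i (by omega) (by omega)
    rw [Set.union_comm, hσ.add _ _ hUc (hc n (by omega)) hdisj.symm,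
      ih K (fun i hi => hc i (by omega)) (fun i hi j hj hij => hd i (by omega) j (by omega) hij)]
    ring

private lemma sigma_split (hσ : IsTopMeasure σ) :
    ∀ (n : ℕ) (U : ℕ → Set Torus2) (b : ℕ → ℝ), (∀ i, i < n → IsOpen (U i)) →
    (∀ i, i < n → ∀ j, j < n → i ≠ j → Disjoint (U i) (U j)) →
    (∀ i, i < n → ∀ K' : Set Torus2, IsCompact K' → K' ⊆ U i → σ K' ≤ b i) →
    ∀ K : Set Torus2, IsCompact K → K ⊆ ⋃ i ∈ Finset.range n, U i →
    σ K ≤ ∑ i ∈ Finset.range n, b i := by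
  intro n
  induction n with
  | zero =>
    intro U b _ _ _ K _ hK
    simp only [Finset.range_zero, Finset.sum_empty]
    have : K = ∅ := by simpa using (Set.subset_empty_iff.mp (by simpa using hK))
    rw [this, sigma_empty hσ]
  | succ n ih =>
    intro U b ho hd hb K hKc hKU
    set K0 : Set Torus2 := K \ U n with hK0
    set K1 : Set Torus2 := K \ ⋃ i ∈ Finset.range n, U i with hK1
    have hK0c : IsCompact K0 := hKc.diff (ho n (by omega))
    have hUopen : IsOpen (⋃ i ∈ Finset.range n, U i) :=
     by
      apply isOpen_biUnion
      intro i hi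
      exact ho i (Nat.lt_succ_of_lt (Finset.mem_range.mp hi))
    have hK1c : IsCompact K1 := hKc.diff hUopen
    have hmemU : ∀ x ∈ K, x ∈ U n ∨ ∃ i < n, x ∈ U i := by
      intro x hx
      have := hKU hx
      simp only [Set.mem_iUnion, Finset.mem_range] at this
      obtain ⟨i, hi, hxi⟩ := this
      rcases Nat.lt_succ_iff_lt_or_eq.mp hi with h | rfl
      · exact Or.inr ⟨i, h, hxi⟩
      · exact Or.inl hxi
    have hKeq : K0 ∪ K1 = K := by
      apply Set.Subset.antisymm
      · exact Set.union_subset Set.diff_subset Set.diff_subset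
      · intro x hx
        by_cases hxu : x ∈ U n
        · refine Or.inr ⟨hx, ?_⟩
          simp only [Set.mem_iUnion, Finset.mem_range, not_exists]
          intro i hi hxi
          exact Set.disjoint_left.mp (hd n (by omega) i (by omega) (by omega)) hxu hxi
        · exact Or.inl ⟨hx, hxu⟩
    have hdisj : Disjoint K0 K1 := by
      rw [Set.disjoint_left]
      rintro x ⟨hx, hxn⟩ ⟨_, hxm⟩
      rcases hmemU x hx with h | ⟨i, hi, hxi⟩
      · exact hxn h
      · exact hxm (by simp only [Set.mem_iUnion, Finset.mem_range]; exact ⟨i, hi, hxi⟩)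
    have h0 : σ K0 ≤ ∑ i ∈ Finset.range n, b i := by
      refine ih U b (fun i hi => ho i (by omega))
        (fun i hi j hj hij => hd i (by omega) j (by omega) hij)
        (fun i hi => hb i (by omega)) K0 hK0c ?_
      rintro x ⟨hx, hxn⟩
      rcases hmemU x hx with h | ⟨i, hi, hxi⟩
      · exact absurd h hxn
      · simp only [Set.mem_iUnion, Finset.mem_range]; exact ⟨i, hi, hxi⟩
    have h1 : σ K1 ≤ b n := by
      refine hb n (by omega) K1 hK1c ?_
      rintro x ⟨hx, hxm⟩
      rcases hmemU x hx with h | ⟨i, hi, hxi⟩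
      · exact h
      · exact absurd (by simp only [Set.mem_iUnion, Finset.mem_range]; exact ⟨i, hi, hxi⟩) hxm
    calc σ K = σ (K0 ∪ K1) := by rw [hKeq]
    _ = σ K0 + σ K1 := hσ.add _ _ hK0c hK1c hdisj
    _ ≤ (∑ i ∈ Finset.range n, b i) + b n := by linarith
    _ = ∑ i ∈ Finset.range (n+1), b i := (Finset.sum_range_succ b n).symm

/-! ### The linear map `Φ` and the arc-length function `fA` -/

private noncomputable def Phi (k l : ℤ) : Torus2 → UnitAddCircle := fun x => l • x.1 - k • x.2

private lemma Phi_cont (k l : ℤ) : Continuous (Phi k l) := by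
  unfold Phi
  exact ((continuous_zsmul l).comp continuous_fst).sub ((continuous_zsmul k).comp continuous_snd)

private lemma Phi_add (k l : ℤ) (x v : Torus2) : Phi k l (x + v) = Phi k l x + Phi k l v := by
  simp only [Phi, Prod.fst_add, Prod.snd_add, smul_add]
  abel

private lemma Phi_sub (k l : ℤ) (x v : Torus2) : Phi k l (x - v) = Phi k l x - Phi k l v := by
  simp only [Phi, Prod.fst_sub, Prod.snd_sub, smul_sub]
  abel

private lemma Phi_surj (k l : ℤ) (hkl : IsCoprime k l) (c : UnitAddCircle) :
    ∃ v : Torus2, Phi k l v = c := by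
  obtain ⟨a, b, hab⟩ := hkl
  refine ⟨(b • c, -(a • c)), ?_⟩
  simp only [Phi, smul_neg, sub_neg_eq_add, smul_smul]
  rw [← add_smul]
  have : l * b + k * a = 1 := by linarith [hab]
  rw [this, one_smul]

private noncomputable def fA (σ : Set Torus2 → ℝ) (k l : ℤ) (a : ℝ) : ℝ :=
  σ (Phi k l ⁻¹' (((↑) : ℝ → UnitAddCircle) '' Icc (0:ℝ) a))

private lemma arc_closed (k l : ℤ) (t u : ℝ) :
    IsClosed (Phi k l ⁻¹' (((↑) : ℝ → UnitAddCircle) '' Icc t u)) :=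
  IsClosed.preimage (Phi_cont k l)
    ((isCompact_Icc.image (AddCircle.continuous_mk' 1)).isClosed)

private lemma arc_compact (k l : ℤ) (t u : ℝ) :
    IsCompact (Phi k l ⁻¹' (((↑) : ℝ → UnitAddCircle) '' Icc t u)) :=
  (arc_closed k l t u).isCompact

variable (σ k l) in
private def InvHyp : Prop := ∀ v : Torus2, ∀ A : Set Torus2, IsOpen A ∨ IsClosed A →
      σ ((fun x => x + v) '' A) = σ A

private lemma trans_val {k l : ℤ}
    (hinv : ∀ v : Torus2, ∀ A : Set Torus2, IsOpen A ∨ IsClosed A →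
      σ ((fun x => x + v) '' A) = σ A)
    (hkl : IsCoprime k l) (t a : ℝ) :
    σ (Phi k l ⁻¹' (((↑) : ℝ → UnitAddCircle) '' Icc t (t + a))) = fA σ k l a := by
  obtain ⟨v, hv⟩ := Phi_surj k l hkl ((t : ℝ) : UnitAddCircle)
  have h1 : Icc t (t+a) = (fun x : ℝ => x + t) '' Icc 0 a := by
    rw [Set.image_add_const_Icc, zero_add, add_comm a t]
  have h2 : ((↑) : ℝ → UnitAddCircle) '' Icc t (t+a)
      = (fun y => y + ((t:ℝ):UnitAddCircle)) '' (((↑) : ℝ → UnitAddCircle) '' Icc (0:ℝ) a) := by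
    rw [h1, circle_trans_image]
  set B := ((↑) : ℝ → UnitAddCircle) '' Icc (0:ℝ) a with hB
  have h3 : Phi k l ⁻¹' ((fun y => y + Phi k l v) '' B)
      = (fun x => x + v) '' (Phi k l ⁻¹' B) := by
    ext x
    simp only [Set.mem_preimage, Set.mem_image]
    constructor
    · rintro ⟨y, hy, hyx⟩
      refine ⟨x - v, ?_, by abel⟩
      show Phi k l (x - v) ∈ B
      rw [Phi_sub]
      have : y = Phi k l x - Phi k l v := by rw [← hyx]; abel
      rwa [← this]
    · rintro ⟨z, hz, rfl⟩
      exact ⟨Phi k l z, hz, (Phi_add k l z v).symm⟩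
  rw [h2, ← hv, h3]
  exact hinv v _ (Or.inr (arc_closed k l 0 a))

end Aux


section Ineq

variable {σ : Set Torus2 → ℝ} {k l : ℤ}

private lemma fA_nonneg (hσ : IsTopMeasure σ) (a : ℝ) : 0 ≤ fA σ k l a :=
  (hσ.mem_Icc _ (Or.inr (arc_closed k l 0 a))).1

private lemma pack_univ (hσ : IsTopMeasure σ)
    (hinv : ∀ v : Torus2, ∀ A : Set Torus2, IsOpen A ∨ IsClosed A →
      σ ((fun x => x + v) '' A) = σ A)
    (hkl : IsCoprime k l) {n : ℕ} (hn : 0 < n) {g : ℝ} (hg : 0 < g)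
    (h1 : (n:ℝ) * g < 1) : (n:ℝ) * fA σ k l g ≤ 1 := by
  have hnr : (0:ℝ) < n := by exact_mod_cast hn
  set d : ℝ := 1/n with hd
  have hgd : g < d := by rw [hd, lt_div_iff₀ hnr]; nlinarith
  have hnd : (n:ℝ) * d ≤ 1 := by rw [hd]; rw [mul_one_div, div_self (ne_of_gt hnr)]
  set K : ℕ → Set Torus2 :=
    fun i => Phi k l ⁻¹' (((↑) : ℝ → UnitAddCircle) '' Icc ((i:ℝ)*d) ((i:ℝ)*d + g)) with hK
  have hKc : ∀ i, IsCompact (K i) := fun i => arc_compact k l _ _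
  have hKd : ∀ i, i < n → ∀ j, j < n → i ≠ j → Disjoint (K i) (K j) := by
    intro i hi j hj hij
    exact Disjoint.preimage _ (circle_disj (arcs_sub_Ico hg.le hgd hnd hi)
      (arcs_sub_Ico hg.le hgd hnd hj) (arcs_disjoint hg.le hgd hij))
  have hsum : σ (⋃ i ∈ Finset.range n, K i) = ∑ i ∈ Finset.range n, σ (K i) :=
    sigma_biUnion hσ n K (fun i _ => hKc i) hKd
  have hval : ∀ i ∈ Finset.range n, σ (K i) = fA σ k l g := fun i _ => trans_val hinv hkl _ g
  have hle : σ (⋃ i ∈ Finset.range n, K i) ≤ 1 := by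
    have hc : IsCompact (⋃ i ∈ Finset.range n, K i) :=
      (Finset.range n).isCompact_biUnion (fun i _ => hKc i)
    exact (hσ.mem_Icc _ (Or.inr hc.isClosed)).2
  rw [hsum, Finset.sum_congr rfl hval, Finset.sum_const, Finset.card_range,
    nsmul_eq_mul] at hle
  exact hle

private lemma pack_arc (hσ : IsTopMeasure σ)
    (hinv : ∀ v : Torus2, ∀ A : Set Torus2, IsOpen A ∨ IsClosed A →
      σ ((fun x => x + v) '' A) = σ A)
    (hkl : IsCoprime k l) {p : ℕ} (hp : 0 < p) {s αr : ℝ} (hs : 0 < s)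
    (hα1 : αr < 1) (h1 : (p:ℝ) * s < αr) : (p:ℝ) * fA σ k l s ≤ fA σ k l αr := by
  have hpr : (0:ℝ) < p := by exact_mod_cast hp
  set d : ℝ := αr / p with hd
  have hαpos : 0 < αr := lt_trans (by positivity) h1
  have hsd : s < d := by rw [hd, lt_div_iff₀ hpr]; nlinarith
  have hpd : (p:ℝ) * d = αr := by rw [hd]; field_simp
  have hnd : (p:ℝ) * d ≤ 1 := by rw [hpd]; linarith
  set K : ℕ → Set Torus2 :=
    fun i => Phi k l ⁻¹' (((↑) : ℝ → UnitAddCircle) '' Icc ((i:ℝ)*d) ((i:ℝ)*d + s)) with hK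
  have hKc : ∀ i, IsCompact (K i) := fun i => arc_compact k l _ _
  have hKd : ∀ i, i < p → ∀ j, j < p → i ≠ j → Disjoint (K i) (K j) := by
    intro i hi j hj hij
    exact Disjoint.preimage _ (circle_disj (arcs_sub_Ico hs.le hsd hnd hi)
      (arcs_sub_Ico hs.le hsd hnd hj) (arcs_disjoint hs.le hsd hij))
  have hsum : σ (⋃ i ∈ Finset.range p, K i) = ∑ i ∈ Finset.range p, σ (K i) :=
    sigma_biUnion hσ p K (fun i _ => hKc i) hKd
  have hval : ∀ i ∈ Finset.range p, σ (K i) = fA σ k l s := fun i _ => trans_val hinv hkl _ s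
  have hsub : (⋃ i ∈ Finset.range p, K i)
      ⊆ Phi k l ⁻¹' (((↑) : ℝ → UnitAddCircle) '' Icc (0:ℝ) αr) := by
    apply Set.iUnion₂_subset
    intro i hi
    apply Set.preimage_mono
    apply Set.image_mono
    have hip : (i:ℝ) + 1 ≤ (p:ℝ) := by exact_mod_cast Finset.mem_range.mp hi
    have hdpos : 0 < d := lt_of_le_of_lt hs.le hsd
    rintro x ⟨hx1, hx2⟩
    constructor
    · have : (0:ℝ) ≤ (i:ℝ)*d := by positivity
      linarith
    · nlinarith
  have hle : σ (⋃ i ∈ Finset.range p, K i)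
      ≤ σ (Phi k l ⁻¹' (((↑) : ℝ → UnitAddCircle) '' Icc (0:ℝ) αr)) := by
    refine hσ.mono _ _ ?_ (arc_compact k l 0 αr) hsub
    exact (Finset.range p).isCompact_biUnion (fun i _ => hKc i)
  rw [hsum, Finset.sum_congr rfl hval, Finset.sum_const, Finset.card_range,
    nsmul_eq_mul] at hle
  exact hle

private lemma copack (hσ : IsTopMeasure σ)
    (hinv : ∀ v : Torus2, ∀ A : Set Torus2, IsOpen A ∨ IsClosed A →
      σ ((fun x => x + v) '' A) = σ A)
    (hkl : IsCoprime k l) {n : ℕ} (hn : 0 < n) {s : ℝ} (hs : 0 < s)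
    (hsn : s < 1/(n:ℝ)) :
    1 - (n:ℝ) * fA σ k l s ≤ (n:ℝ) * fA σ k l (1/(n:ℝ) - s) := by
  have hnr : (0:ℝ) < n := by exact_mod_cast hn
  set d : ℝ := 1/(n:ℝ) with hd
  set g : ℝ := d - s with hg
  have hgpos : 0 < g := by rw [hg]; linarith
  have hnd : (n:ℝ) * d ≤ 1 := by rw [hd, mul_one_div, div_self (ne_of_gt hnr)]
  set K : ℕ → Set Torus2 :=
    fun i => Phi k l ⁻¹' (((↑) : ℝ → UnitAddCircle) '' Icc ((i:ℝ)*d) ((i:ℝ)*d + s)) with hK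
  have hKc : ∀ i, IsCompact (K i) := fun i => arc_compact k l _ _
  have hKd : ∀ i, i < n → ∀ j, j < n → i ≠ j → Disjoint (K i) (K j) := by
    intro i hi j hj hij
    exact Disjoint.preimage _ (circle_disj (arcs_sub_Ico hs.le (by rw [hg] at hgpos; linarith) hnd hi)
      (arcs_sub_Ico hs.le (by rw [hg] at hgpos; linarith) hnd hj)
      (arcs_disjoint hs.le (by rw [hg] at hgpos; linarith) hij))
  set C : Set Torus2 := ⋃ i ∈ Finset.range n, K i with hC
  have hCc : IsCompact C := (Finset.range n).isCompact_biUnion (fun i _ => hKc i)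
  have hCval : σ C = (n:ℝ) * fA σ k l s := by
    have hsum : σ C = ∑ i ∈ Finset.range n, σ (K i) :=
      sigma_biUnion hσ n K (fun i _ => hKc i) hKd
    have hval : ∀ i ∈ Finset.range n, σ (K i) = fA σ k l s := fun i _ => trans_val hinv hkl _ s
    rw [hsum, Finset.sum_congr rfl hval, Finset.sum_const, Finset.card_range, nsmul_eq_mul]
  have hcompl : σ Cᶜ = 1 - σ C := by linarith [hσ.compl_add C hCc]
  set U : ℕ → Set Torus2 :=
    fun i => Phi k l ⁻¹' (((↑) : ℝ → UnitAddCircle) '' Ioo ((i:ℝ)*d + s) ((i:ℝ)*d + s + g)) with hU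
  have hUo : ∀ i, IsOpen (U i) := by
    intro i
    apply (Phi_cont k l).isOpen_preimage
    exact (fun s hs => QuotientAddGroup.isOpenMap_coe s hs) _ isOpen_Ioo
  have hIooIco : ∀ i : ℕ, i < n → Ioo ((i:ℝ)*d + s) ((i:ℝ)*d + s + g) ⊆ Ico (0:ℝ) 1 := by
    intro i hi
    have hip : (i:ℝ) + 1 ≤ (n:ℝ) := by exact_mod_cast hi
    have hdpos : 0 < d := by rw [hd]; positivity
    rintro x ⟨hx1, hx2⟩
    have he : (i:ℝ)*d + s + g = ((i:ℝ)+1)*d := by rw [hg]; ring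
    constructor
    · have : (0:ℝ) ≤ (i:ℝ)*d := by positivity
      linarith
    · rw [he] at hx2
      nlinarith
  have hUd : ∀ i, i < n → ∀ j, j < n → i ≠ j → Disjoint (U i) (U j) := by
    intro i hi j hj hij
    refine Disjoint.preimage _ (circle_disj (hIooIco i hi) (hIooIco j hj) ?_)
    have key : ∀ i j : ℕ, i < j →
        Disjoint (Ioo ((i:ℝ)*d + s) ((i:ℝ)*d + s + g)) (Ioo ((j:ℝ)*d + s) ((j:ℝ)*d + s + g)) := by
      intro i j h
      rw [Set.disjoint_left]
      rintro x ⟨h1, h2⟩ ⟨h3, h4⟩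
      have hij : (i:ℝ) + 1 ≤ (j:ℝ) := by exact_mod_cast h
      have hdpos : 0 < d := by rw [hd]; positivity
      have he : (i:ℝ)*d + s + g = ((i:ℝ)+1)*d := by rw [hg]; ring
      rw [he] at h2
      nlinarith
    rcases hij.lt_or_gt with h | h
    · exact key i j h
    · exact (key j i h).symm
  have hUb : ∀ i, i < n → ∀ K' : Set Torus2, IsCompact K' → K' ⊆ U i →
      σ K' ≤ fA σ k l g := by
    intro i _ K' hK'c hK'U
    have h2 : K' ⊆ Phi k l ⁻¹'
        (((↑) : ℝ → UnitAddCircle) '' Icc ((i:ℝ)*d + s) (((i:ℝ)*d + s) + g)) := by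
      refine hK'U.trans (Set.preimage_mono (Set.image_mono ?_))
      exact Set.Ioo_subset_Icc_self
    calc σ K' ≤ σ (Phi k l ⁻¹'
        (((↑) : ℝ → UnitAddCircle) '' Icc ((i:ℝ)*d + s) (((i:ℝ)*d + s) + g))) :=
      hσ.mono _ _ hK'c (arc_compact k l _ _) h2
    _ = fA σ k l g := trans_val hinv hkl _ g
  have hCcompl_sub : Cᶜ ⊆ ⋃ i ∈ Finset.range n, U i := by
    have hCeq : C = Phi k l ⁻¹'
        (((↑) : ℝ → UnitAddCircle) '' ⋃ i ∈ Finset.range n, Icc ((i:ℝ)*d) ((i:ℝ)*d + s)) := by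
      rw [hC, hK]
      rw [Set.image_iUnion₂, Set.preimage_iUnion₂]
    rw [hCeq, ← Set.preimage_compl]
    have hTsub : (((↑) : ℝ → UnitAddCircle) ''
          ⋃ i ∈ Finset.range n, Icc ((i:ℝ)*d) ((i:ℝ)*d + s))ᶜ
        ⊆ ((↑) : ℝ → UnitAddCircle) ''
          ⋃ i ∈ Finset.range n, Ioo ((i:ℝ)*d + s) ((i:ℝ)*d + s + g) := by
      apply circle_compl_sub
      rintro r ⟨hr, hrS⟩
      simp only [Set.mem_iUnion, Finset.mem_range, not_exists] at hrS
      have hno : ∀ i : ℕ, i < n → r ∉ Icc ((i:ℝ)*(1/(n:ℝ))) ((i:ℝ)*(1/(n:ℝ)) + s) := by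
        intro i hi hmem
        exact hrS i hi (by rw [hd]; exact hmem)
      obtain ⟨i, hi, hmem⟩ := gaps_cover hn hr hno
      simp only [Set.mem_iUnion, Finset.mem_range]
      refine ⟨i, hi, ?_⟩
      have he1 : (i:ℝ)*d + s = (i:ℝ)*(1/(n:ℝ)) + s := by rw [hd]
      have he2 : (i:ℝ)*d + s + g = (i:ℝ)*(1/(n:ℝ)) + s + (1/(n:ℝ) - s) := by
        rw [hg, hd]
      rw [he1, he2]
      exact hmem
    refine (Set.preimage_mono hTsub).trans ?_
    rw [Set.image_iUnion₂, Set.preimage_iUnion₂]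
  have hClosed : IsClosed C := hCc.isClosed
  have hlub := hσ.inner_reg Cᶜ hClosed.isOpen_compl
  have hub : (n:ℝ) * fA σ k l g ∈
      upperBounds {r : ℝ | ∃ K : Set Torus2, IsCompact K ∧ K ⊆ Cᶜ ∧ σ K = r} := by
    rintro r ⟨K', hK'c, hK'sub, rfl⟩
    have := sigma_split hσ n U (fun _ => fA σ k l g) (fun i _ => hUo i) hUd hUb K' hK'c
      (hK'sub.trans hCcompl_sub)
    rw [Finset.sum_const, Finset.card_range, nsmul_eq_mul] at this
    exact this
  have hCle : σ Cᶜ ≤ (n:ℝ) * fA σ k l g := hlub.2 hub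
  linarith [hCval, hcompl, hCle]

set_option maxHeartbeats 1000000 in
private lemma fA_ge (hσ : IsTopMeasure σ)
    (hinv : ∀ v : Torus2, ∀ A : Set Torus2, IsOpen A ∨ IsClosed A →
      σ ((fun x => x + v) '' A) = σ A)
    (hkl : IsCoprime k l) {αr : ℝ} (hαr : αr ∈ Ioo (0:ℝ) 1) : αr ≤ fA σ k l αr := by
  refine le_of_forall_pos_le_add ?_
  intro ε hε
  obtain ⟨n, hn⟩ := exists_nat_gt (max (2/ε) (1/αr))
  have hα0 := hαr.1
  have hα1 := hαr.2
  have hn1 : 2/ε < (n:ℝ) := lt_of_le_of_lt (le_max_left _ _) hn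
  have hn2 : 1/αr < (n:ℝ) := lt_of_le_of_lt (le_max_right _ _) hn
  have hnr : (0:ℝ) < n := lt_trans (one_div_pos.mpr hα0) hn2
  have hn0 : 0 < n := by exact_mod_cast hnr
  set p : ℕ := ⌊αr * n⌋₊ with hp
  have h1αn : 1 < αr * n := by
    rw [div_lt_iff₀ hα0] at hn2
    linarith [mul_comm αr (n:ℝ)]
  have hp1 : 1 ≤ p := by
    rw [hp, Nat.le_floor_iff (by positivity)]
    push_cast
    linarith
  have hpr : (0:ℝ) < p := by exact_mod_cast hp1
  have hple : (p:ℝ) ≤ αr * n := Nat.floor_le (by positivity)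
  have hplt : αr * n < (p:ℝ) + 1 := Nat.lt_floor_add_one _
  clear_value p
  have hpn : (p:ℝ) ≤ n := by nlinarith
  set g : ℝ := 1/(2*(n:ℝ)*n) with hg
  have hgpos : 0 < g := by rw [hg]; positivity
  set s : ℝ := 1/(n:ℝ) - g with hs
  clear_value g s
  have hgn : g < 1/(n:ℝ) := by
    rw [hg, div_lt_div_iff₀ (by positivity) hnr]
    nlinarith
  have hspos : 0 < s := by rw [hs]; linarith
  -- small gap bound
  have hfg : ((n*n : ℕ):ℝ) * fA σ k l g ≤ 1 := by
    refine pack_univ hσ hinv hkl (Nat.mul_pos hn0 hn0) hgpos ?_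
    push_cast
    rw [hg]
    rw [mul_one_div, div_lt_iff₀ (by positivity)]
    nlinarith
  have hY : fA σ k l g ≤ 1/((n:ℝ)*n) := by
    rw [le_div_iff₀ (by positivity)]
    push_cast at hfg
    nlinarith
  -- co-packing bound
  have hcp : 1 - (n:ℝ) * fA σ k l s ≤ (n:ℝ) * fA σ k l g := by
    have := copack hσ hinv hkl hn0 hspos (by rw [hs]; linarith)
    have hgeq : 1/(n:ℝ) - s = g := by rw [hs]; ring
    rwa [hgeq] at this
  have hX : 1/(n:ℝ) - fA σ k l g ≤ fA σ k l s := by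
    have hnn : (n:ℝ) * (1/(n:ℝ)) = 1 := by field_simp
    nlinarith [hcp, hnn, hnr]
  -- packing inside the arc
  have hps : (p:ℝ) * s < αr := by
    have h1n : (p:ℝ)*(1/(n:ℝ)) ≤ αr := by
      rw [mul_one_div, div_le_iff₀ hnr]
      nlinarith
    have he : (p:ℝ)*s = (p:ℝ)*(1/(n:ℝ)) - (p:ℝ)*g := by rw [hs]; ring
    have hpg : 0 < (p:ℝ)*g := mul_pos hpr hgpos
    linarith [he, h1n, hpg]
  have hpa : (p:ℝ) * fA σ k l s ≤ fA σ k l αr :=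
    pack_arc hσ hinv hkl hp1 hspos hα1 hps
  -- final arithmetic
  have hchain1 : (p:ℝ) * (1/(n:ℝ) - fA σ k l g) ≤ (p:ℝ) * fA σ k l s :=
    mul_le_mul_of_nonneg_left hX (by positivity)
  have hchain2 : (p:ℝ) * (1/(n:ℝ) - 1/((n:ℝ)*n)) ≤ (p:ℝ) * (1/(n:ℝ) - fA σ k l g) :=
    mul_le_mul_of_nonneg_left (by linarith) (by positivity)
  have hlow1 : αr - 1/(n:ℝ) ≤ (p:ℝ)*(1/(n:ℝ)) := by
    rw [mul_one_div, le_div_iff₀ hnr]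
    have hnn : (1/(n:ℝ))*(n:ℝ) = 1 := by field_simp
    have hexp : (αr - 1/(n:ℝ))*n = αr*n - (1/(n:ℝ))*n := by ring
    rw [hexp, hnn]
    linarith
  have hlow2 : (p:ℝ)*(1/((n:ℝ)*n)) ≤ 1/(n:ℝ) := by
    rw [mul_one_div, div_le_div_iff₀ (by positivity) hnr]
    have := mul_le_mul_of_nonneg_right hpn hnr.le
    linarith
  have hεn : 2/(n:ℝ) < ε := by
    rw [div_lt_iff₀ hnr]
    rw [div_lt_iff₀ hε] at hn1
    linarith
  have he : (p:ℝ) * (1/(n:ℝ) - 1/((n:ℝ)*n))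
      = (p:ℝ)*(1/(n:ℝ)) - (p:ℝ)*(1/((n:ℝ)*n)) := by ring
  have h2n : 2/(n:ℝ) = 2*(1/(n:ℝ)) := by ring
  linarith

end Ineq

/-- The value of a translation-invariant topological measure on the torus on any
closed linear annulus equals the area of the annulus. -/
theorem topMeasure_annulus_eq_area (σ : Set Torus2 → ℝ) (hσ : IsTopMeasure σ)
    (hinv : ∀ v : Torus2, ∀ A : Set Torus2, IsOpen A ∨ IsClosed A →
      σ ((fun x => x + v) '' A) = σ A)
    (k l : ℤ) (hkl : IsCoprime k l) (α : ℝ) (hα : α ∈ Set.Ioo (0 : ℝ) 1) :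
    σ ((fun x : Torus2 => l • x.1 - k • x.2) ⁻¹'
        (((↑) : ℝ → UnitAddCircle) '' Set.Icc (0 : ℝ) α)) = α := by
  obtain ⟨hα0, hα1⟩ := hα
  show fA σ k l α = α
  have hlow : α ≤ fA σ k l α := fA_ge hσ hinv hkl ⟨hα0, hα1⟩
  have hub : ∀ δ : ℝ, 0 < δ → δ < (1-α)/2 → fA σ k l α ≤ α + 2*δ := by
    intro δ hδ hδ2
    set β : ℝ := 1 - α - 2*δ with hβ
    have hβIoo : β ∈ Ioo (0:ℝ) 1 := ⟨by rw [hβ]; linarith, by rw [hβ]; linarith⟩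
    have hlowβ : β ≤ fA σ k l β := fA_ge hσ hinv hkl hβIoo
    set K : Set Torus2 := Phi k l ⁻¹' (((↑) : ℝ → UnitAddCircle) '' Icc (0:ℝ) (0+α)) with hKdef
    set K' : Set Torus2 :=
      Phi k l ⁻¹' (((↑) : ℝ → UnitAddCircle) '' Icc (α+δ) ((α+δ)+β)) with hK'def
    have hdisj : Disjoint K K' := by
      refine Disjoint.preimage _ (circle_disj ?_ ?_ ?_)
      · rintro x ⟨hx1, hx2⟩
        exact ⟨by linarith, by linarith⟩
      · rintro x ⟨hx1, hx2⟩
        refine ⟨by linarith, ?_⟩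
        have : (α+δ)+β = 1 - δ := by rw [hβ]; ring
        linarith
      · rw [Set.disjoint_left]
        rintro x ⟨hx1, hx2⟩ ⟨hx3, hx4⟩
        linarith
    have hadd := hσ.add K K' (arc_compact k l _ _) (arc_compact k l _ _) hdisj
    have hle1 : σ (K ∪ K') ≤ 1 :=
      (hσ.mem_Icc _ (Or.inr ((arc_compact k l _ _).union (arc_compact k l _ _)).isClosed)).2
    have e1 : σ K = fA σ k l α := trans_val hinv hkl 0 α
    have e2 : σ K' = fA σ k l β := trans_val hinv hkl (α+δ) β
    have : fA σ k l α + fA σ k l β ≤ 1 := by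
      rw [← e1, ← e2]; linarith
    have hβval : 1 - β = α + 2*δ := by rw [hβ]; ring
    linarith
  by_contra hne
  have hlt : α < fA σ k l α := lt_of_le_of_ne hlow (fun h => hne h.symm)
  set δ : ℝ := min ((fA σ k l α - α)/4) ((1-α)/4) with hδdef
  have hδpos : 0 < δ := lt_min (by linarith) (by linarith)
  have hδsmall : δ < (1-α)/2 := lt_of_le_of_lt (min_le_right _ _) (by linarith)
  have := hub δ hδpos hδsmall
  have hδle : δ ≤ (fA σ k l α - α)/4 := min_le_left _ _
  linarith
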